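/- arXiv:2108.12272 — 5 statements merged into one kernel-verified Lean document; each statement's English description precedes it below -/
import Mathlib

section
/- (First projection lemma) Let V = W⁰ ⊕ W¹ ⊕ W² ⊕ ⋯ be a near inner decomposition of a closed subspace V of a valuation Hilbert module H over a valuation algebra R. Let r ∈ R₁, h ∈ W^k, and suppose f = g⁰ + g¹ + ⋯ + g^m with g^j ∈ W^j, and ord(rh − f) > m. Then f is the orthogonal projection of rh onto W = W⁰ ⊕ ⋯ ⊕ W^m, and ‖f‖² = Σ_{j=0}^m ‖g^j‖² ≤ ‖rh‖². -/
/-- first projection lemma: in a near inner decomposition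
`V = W⁰ ⊕ W¹ ⊕ ⋯`, if `r ∈ R₁`, `h ∈ W^k`, `f = g⁰ + ⋯ + g^m` with `g^j ∈ W^j`,
and `ord (r•h - f) > m`, then `f` is the orthogonal projection of `r•h` onto
`W⁰ ⊕ ⋯ ⊕ W^m`, and `‖f‖² = Σ_{j≤m} ‖g^j‖² ≤ ‖r•h‖²`. -/
theorem first_projection_lemma
    {R : Type*} [Ring R] [Algebra ℂ R]
    {H : Type*} [NormedAddCommGroup H] [InnerProductSpace ℂ H] [CompleteSpace H]
    [Module R H] [IsScalarTower ℂ R H]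
    (ordR : R → ℕ∞) (ord : H → ℕ∞)
    -- analytic valuation axioms
    (hR0 : ∀ r : R, ordR r = ⊤ ↔ r = 0)
    (hRmul : ∀ r s : R, ordR r + ordR s ≤ ordR (r * s))
    (hRsmul : ∀ (c : ℂ) (r : R), c ≠ 0 → ordR (c • r) = ordR r)
    (hRadd : ∀ r s : R, min (ordR r) (ordR s) ≤ ordR (r + s))
    (h0 : ∀ x : H, ord x = ⊤ ↔ x = 0)
    (hmul : ∀ (r : R) (x : H), ordR r + ord x ≤ ord (r • x))
    (hsmul : ∀ (c : ℂ) (x : H), c ≠ 0 → ord (c • x) = ord x)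
    (hadd : ∀ x y : H, min (ord x) (ord y) ≤ ord (x + y))
    (husc : UpperSemicontinuous ord)
    -- `V` is a closed subspace with a near inner decomposition `W`
    (V : Submodule ℂ H) (hVc : IsClosed (V : Set H))
    (W : ℕ → Submodule ℂ H)
    (hWV : ∀ n, W n ≤ V)
    (horth : ∀ i j : ℕ, i ≠ j → ∀ x ∈ W i, ∀ y ∈ W j, (inner ℂ x y : ℂ) = 0)
    (hspan : (V : Set H) =
      closure (Submodule.span ℂ (⋃ n : ℕ, (W n : Set H)) : Set H))
    (hNI : ∀ (k m : ℕ), ∀ h ∈ W k, ∀ g ∈ V, ∀ r : R, 1 ≤ ordR r →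
      (m : ℕ∞) < ord (r • h + g) → ∀ w ∈ W m, (inner ℂ (r • h + g) w : ℂ) = 0)
    -- the data of the lemma
    (r : R) (hr : 1 ≤ ordR r) (k : ℕ) (h : H) (hh : h ∈ W k)
    (m : ℕ) (g : ℕ → H) (hg : ∀ j ≤ m, g j ∈ W j)
    (f : H) (hf : f = ∑ j ∈ Finset.range (m + 1), g j)
    (hord : (m : ℕ∞) < ord (r • h - f)) :
    (∀ w ∈ Submodule.span ℂ (⋃ j ∈ Set.Iic m, (W j : Set H)),
      (inner ℂ (r • h - f) w : ℂ) = 0) ∧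
    ‖f‖ ^ 2 = ∑ j ∈ Finset.range (m + 1), ‖g j‖ ^ 2 ∧
    ‖f‖ ^ 2 ≤ ‖r • h‖ ^ 2 := by

  have hfV : f ∈ V := by
    rw [hf]
    exact Submodule.sum_mem V fun j hj => hWV j (hg j (Finset.mem_range_succ_iff.mp hj))
  have key : ∀ j ≤ m, ∀ w ∈ W j, (inner ℂ (r • h - f) w : ℂ) = 0 := by
    intro j hj w hw
    rw [sub_eq_add_neg] at hord ⊢
    refine hNI k j h hh (-f) (neg_mem hfV) r hr ?_ w hw
    exact lt_of_le_of_lt (by exact_mod_cast hj) hord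
  have perp : ∀ w ∈ Submodule.span ℂ (⋃ j ∈ Set.Iic m, (W j : Set H)),
      (inner ℂ (r • h - f) w : ℂ) = 0 := by
    intro w hw
    induction hw using Submodule.span_induction with
    | mem x hx =>
        simp only [Set.mem_iUnion, Set.mem_Iic] at hx
        obtain ⟨j, hj, hx⟩ := hx
        exact key j hj x hx
    | zero => simp
    | add x y _ _ hx hy => rw [inner_add_right, hx, hy, add_zero]
    | smul c x _ hx => rw [inner_smul_right, hx, mul_zero]
  have hnorm : ‖f‖ ^ 2 = ∑ j ∈ Finset.range (m + 1), ‖g j‖ ^ 2 := by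
    have hinner : (inner ℂ f f : ℂ)
        = ∑ j ∈ Finset.range (m + 1), (inner ℂ (g j) (g j) : ℂ) := by
      rw [hf, inner_sum]
      refine Finset.sum_congr rfl fun j hj => ?_
      rw [sum_inner, Finset.sum_eq_single j]
      · intro i hi hij
        exact horth i j hij _ (hg i (Finset.mem_range_succ_iff.mp hi)) _
          (hg j (Finset.mem_range_succ_iff.mp hj))
      · intro hj'; exact absurd hj hj'
    have := congrArg (RCLike.re (K := ℂ)) hinner
    rw [map_sum] at this
    rw [← inner_self_eq_norm_sq (𝕜 := ℂ) f, this]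
    exact Finset.sum_congr rfl fun j _ =>
      inner_self_eq_norm_sq (𝕜 := ℂ) (g j)
  refine ⟨perp, hnorm, ?_⟩
  have hfspan : f ∈ Submodule.span ℂ (⋃ j ∈ Set.Iic m, (W j : Set H)) := by
    rw [hf]
    refine Submodule.sum_mem _ fun j hj => Submodule.subset_span ?_
    exact Set.mem_iUnion₂.mpr ⟨j, Finset.mem_range_succ_iff.mp hj,
      hg j (Finset.mem_range_succ_iff.mp hj)⟩
  have h1 : (inner ℂ f (r • h - f) : ℂ) = 0 := by
    rw [← inner_conj_symm, perp f hfspan, map_zero]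
  have h2 : r • h = f + (r • h - f) := by abel
  calc ‖f‖ ^ 2 ≤ ‖f‖ ^ 2 + ‖r • h - f‖ ^ 2 := le_add_of_nonneg_right (sq_nonneg _)
    _ = ‖r • h‖ ^ 2 := by
        rw [h2, norm_add_sq (𝕜 := ℂ), h1]
        simp
end

section
/- (Second projection lemma) Let V = W⁰ ⊕ W¹ ⊕ ⋯ be a near inner decomposition of a closed subspace V of a valuation Hilbert module H over a valuation algebra R. Let r ∈ R₁ and h ∈ W^k. Suppose g^j ∈ W^j for j ≥ 0, and with f^m = g⁰ + ⋯ + g^m one has ord(rh − f^m) > m for every m ∈ ℤ≥0. Then the series Σ_j g^j converges in norm to an element f ∈ V, and rh = f; in particular rh ∈ V. -/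
open Filter

/-- second projection lemma: in a near inner decomposition
`V = W⁰ ⊕ W¹ ⊕ ⋯`, if `r ∈ R₁`, `h ∈ W^k`, `g^j ∈ W^j`, and
`ord (r•h - (g⁰ + ⋯ + g^m)) > m` for every `m`, then `Σ_j g^j` converges in
norm to an element `f ∈ V` with `r•h = f`; in particular `r•h ∈ V`. -/
theorem second_projection_lemma
    {R : Type*} [Ring R] [Algebra ℂ R]
    {H : Type*} [NormedAddCommGroup H] [InnerProductSpace ℂ H] [CompleteSpace H]
    [Module R H] [IsScalarTower ℂ R H]
    (ordR : R → ℕ∞) (ord : H → ℕ∞)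
    (hR0 : ∀ r : R, ordR r = ⊤ ↔ r = 0)
    (hRmul : ∀ r s : R, ordR r + ordR s ≤ ordR (r * s))
    (hRsmul : ∀ (c : ℂ) (r : R), c ≠ 0 → ordR (c • r) = ordR r)
    (hRadd : ∀ r s : R, min (ordR r) (ordR s) ≤ ordR (r + s))
    (h0 : ∀ x : H, ord x = ⊤ ↔ x = 0)
    (hmul : ∀ (r : R) (x : H), ordR r + ord x ≤ ord (r • x))
    (hsmul : ∀ (c : ℂ) (x : H), c ≠ 0 → ord (c • x) = ord x)
    (hadd : ∀ x y : H, min (ord x) (ord y) ≤ ord (x + y))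
    (husc : UpperSemicontinuous ord)
    (V : Submodule ℂ H) (hVc : IsClosed (V : Set H))
    (W : ℕ → Submodule ℂ H)
    (hWV : ∀ n, W n ≤ V)
    (horth : ∀ i j : ℕ, i ≠ j → ∀ x ∈ W i, ∀ y ∈ W j, (inner ℂ x y : ℂ) = 0)
    (hspan : (V : Set H) =
      closure (Submodule.span ℂ (⋃ n : ℕ, (W n : Set H)) : Set H))
    (hNI : ∀ (k m : ℕ), ∀ h ∈ W k, ∀ g ∈ V, ∀ r : R, 1 ≤ ordR r →
      (m : ℕ∞) < ord (r • h + g) → ∀ w ∈ W m, (inner ℂ (r • h + g) w : ℂ) = 0)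
    (r : R) (hr : 1 ≤ ordR r) (k : ℕ) (h : H) (hh : h ∈ W k)
    (g : ℕ → H) (hg : ∀ j : ℕ, g j ∈ W j)
    (hord : ∀ m : ℕ, (m : ℕ∞) < ord (r • h - ∑ j ∈ Finset.range (m + 1), g j)) :
    ∃ f : H, f ∈ V ∧
      Tendsto (fun n : ℕ => ∑ j ∈ Finset.range n, g j) atTop (nhds f) ∧
      r • h = f := by
  classical
  set F : ℕ → H := fun n => ∑ j ∈ Finset.range n, g j with hF
  have hFV : ∀ n, F n ∈ V := fun n => Submodule.sum_mem V (fun j _ => hWV j (hg j))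
  set d : ℕ → H := fun m => r • h - F (m + 1) with hd
  have hordd : ∀ m : ℕ, (m : ℕ∞) < ord (d m) := hord
  -- orthogonality of d m to W j for j ≤ m
  have horthd : ∀ m j, j ≤ m → ∀ w ∈ W j, (inner ℂ (d m) w : ℂ) = 0 := by
    intro m j hjm w hw
    have hmem : -(F (m+1)) ∈ V := neg_mem (hFV (m+1))
    have heq : r • h + -(F (m+1)) = d m := by simp [hd, sub_eq_add_neg]
    have hlt : (j : ℕ∞) < ord (r • h + -(F (m+1))) := by
      rw [heq]
      exact lt_of_le_of_lt (by exact_mod_cast hjm) (hordd m)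
    have := hNI k j h hh (-(F (m+1))) hmem r hr hlt w hw
    rwa [heq] at this
  have hdg : ∀ m j, j ≤ m → (inner ℂ (d m) (g j) : ℂ) = 0 :=
    fun m j hjm => horthd m j hjm (g j) (hg j)
  have hdF : ∀ m m', m ≤ m' → (inner ℂ (d m') (F (m'+1) - F (m+1)) : ℂ) = 0 := by
    intro m m' hmm'
    have hsub : F (m'+1) - F (m+1) = ∑ j ∈ Finset.Ico (m+1) (m'+1), g j := by
      rw [Finset.sum_Ico_eq_sub _ (by omega)]
    rw [hsub, inner_sum]
    refine Finset.sum_eq_zero fun j hj => ?_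
    have hj' := Finset.mem_Ico.mp hj
    exact hdg m' j (by omega)
  have hpyth : ∀ m m', m ≤ m' → ‖d m‖^2 = ‖d m'‖^2 + ‖F (m'+1) - F (m+1)‖^2 := by
    intro m m' hmm'
    have hdec : d m = d m' + (F (m'+1) - F (m+1)) := by
      simp only [hd]
      abel
    rw [hdec, @norm_add_sq ℂ, hdF m m' hmm']
    simp
  set a : ℕ → ℝ := fun m => ‖d m‖^2 with ha
  have hanti : Antitone a := by
    intro m m' hmm'
    have hp := hpyth m m' hmm'
    simp only [ha]
    nlinarith [sq_nonneg ‖F (m'+1) - F (m+1)‖]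
  have hbdd : BddBelow (Set.range a) := by
    refine ⟨0, ?_⟩
    rintro x ⟨m, rfl⟩
    positivity
  have hconv : Tendsto a atTop (nhds (⨅ m, a m)) := tendsto_atTop_ciInf hanti hbdd
  have hacauchy : CauchySeq a := hconv.cauchySeq
  have hGc : CauchySeq (fun m => F (m+1)) := by
    rw [Metric.cauchySeq_iff']
    intro ε hε
    obtain ⟨N, hN⟩ := Metric.cauchySeq_iff'.mp hacauchy (ε^2) (by positivity)
    refine ⟨N, fun n hn => ?_⟩
    have h1 := hpyth N n hn
    have h2 := hN n hn
    rw [Real.dist_eq] at h2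
    have h3 : ‖F (n+1) - F (N+1)‖^2 < ε^2 := by
      have heq2 : ‖F (n+1) - F (N+1)‖^2 = a N - a n := by rw [ha]; simp only []; rw [h1]; ring
      rw [heq2]
      calc a N - a n ≤ |a n - a N| := by rw [abs_sub_comm]; exact le_abs_self _
        _ < ε^2 := h2
    have h4 := Real.sqrt_lt_sqrt (sq_nonneg _) h3
    rwa [Real.sqrt_sq (norm_nonneg _), Real.sqrt_sq hε.le, ← dist_eq_norm] at h4
  obtain ⟨f, hf⟩ := cauchySeq_tendsto_of_complete hGc
  have hFf : Tendsto F atTop (nhds f) := by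
    rw [← tendsto_add_atTop_iff_nat 1]
    exact hf
  have hfV : f ∈ V := hVc.mem_of_tendsto hf (Eventually.of_forall fun m => hFV (m+1))
  have hdlim : Tendsto d atTop (nhds (r • h - f)) := Tendsto.const_sub _ hf
  have hzero : r • h - f = 0 := by
    rw [← h0]
    by_contra hne
    obtain ⟨n, hn⟩ := WithTop.ne_top_iff_exists.mp hne
    have hlt : ord (r • h - f) < ((n+1 : ℕ) : ℕ∞) := by
      rw [← hn]
      exact Nat.cast_lt.mpr (by omega)
    have hev : ∀ᶠ m in atTop, ord (d m) < ((n+1 : ℕ) : ℕ∞) :=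
      hdlim.eventually (husc (r • h - f) _ hlt)
    obtain ⟨m, hm1, hm2⟩ := (hev.and (eventually_ge_atTop (n+1))).exists
    have hlt2 := lt_trans (hordd m) hm1
    have : m < n + 1 := by exact_mod_cast hlt2
    omega
  exact ⟨f, hfV, hFf, by rwa [sub_eq_zero] at hzero⟩
end

section
/- If V is a closed R₁-invariant subspace of a valuation Hilbert module H over a valuation algebra R (i.e., R₁·V ⊆ V), then the near homogeneous decomposition V = W₀ ⊕ W₁ ⊕ ⋯ of V is a near inner decomposition: whenever h ∈ W_k, g ∈ V, r ∈ R₁, and ord(rh + g) > m, then rh + g ⟂ W_m. -/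
variable {H : Type*} [NormedAddCommGroup H] [InnerProductSpace ℂ H]

/-- The valuation subspace series `V_k = {h ∈ V : ord h ≥ k}`. -/
def valSeries (ord : H → ℕ∞) (V : Submodule ℂ H) (k : ℕ) : Set H :=
  {x | x ∈ V ∧ (k : ℕ∞) ≤ ord x}

/-- The near homogeneous components `W_k = V_k ⊖ V_{k+1}`. -/
def nearHomog (ord : H → ℕ∞) (V : Submodule ℂ H) (k : ℕ) : Set H :=
  {x | x ∈ valSeries ord V k ∧ ∀ y ∈ valSeries ord V (k + 1), (inner ℂ x y : ℂ) = 0}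

/-- if `V` is a closed `R₁`-invariant subspace, then its near
homogeneous decomposition is near inner. -/
theorem invariant_implies_nearInner
    {R : Type*} [Ring R] [Algebra ℂ R] [CompleteSpace H]
    [Module R H] [IsScalarTower ℂ R H]
    (ordR : R → ℕ∞) (ord : H → ℕ∞)
    (hR0 : ∀ r : R, ordR r = ⊤ ↔ r = 0)
    (hRmul : ∀ r s : R, ordR r + ordR s ≤ ordR (r * s))
    (hRsmul : ∀ (c : ℂ) (r : R), c ≠ 0 → ordR (c • r) = ordR r)
    (hRadd : ∀ r s : R, min (ordR r) (ordR s) ≤ ordR (r + s))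
    (h0 : ∀ x : H, ord x = ⊤ ↔ x = 0)
    (hmul : ∀ (r : R) (x : H), ordR r + ord x ≤ ord (r • x))
    (hsmul : ∀ (c : ℂ) (x : H), c ≠ 0 → ord (c • x) = ord x)
    (hadd : ∀ x y : H, min (ord x) (ord y) ≤ ord (x + y))
    (husc : UpperSemicontinuous ord)
    (V : Submodule ℂ H) (hVc : IsClosed (V : Set H))
    (hinv : ∀ r : R, 1 ≤ ordR r → ∀ v ∈ V, r • v ∈ V) :
    ∀ (k m : ℕ), ∀ h ∈ nearHomog ord V k, ∀ g ∈ V, ∀ r : R, 1 ≤ ordR r →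
      (m : ℕ∞) < ord (r • h + g) →
      ∀ w ∈ nearHomog ord V m, (inner ℂ (r • h + g) w : ℂ) = 0 := by
  intro k m h hh g hg r hr hord w hw
  have hmem : r • h + g ∈ valSeries ord V (m + 1) := by
    refine ⟨V.add_mem (hinv r hr h hh.1.1) hg, ?_⟩
    have : ((m : ℕ∞) + 1) ≤ ord (r • h + g) := Order.add_one_le_of_lt hord
    simpa [Nat.cast_add] using this
  have := hw.2 _ hmem
  rw [← inner_conj_symm, this, map_zero]
end

section
/- If V is a closed R₁-invariant subspace of a valuation Hilbert module H, then the near homogeneous decomposition of V has the full projection property: for all k, m ∈ ℤ≥0, r ∈ R₁, h ∈ W_k, g ∈ V with ord(rh + g) ≥ m, we have P_m^H(rh + g) ∈ P_m^H(W_m), where P_m^H is the orthogonal projection of H onto its m-th near homogeneous component H_m. -/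
variable {H : Type*} [NormedAddCommGroup H] [InnerProductSpace ℂ H]

/-- if `V` is a closed `R₁`-invariant subspace, then its near
homogeneous decomposition has the full projection property. -/
theorem invariant_implies_fullProjection
    {R : Type*} [Ring R] [Algebra ℂ R] [CompleteSpace H]
    [Module R H] [IsScalarTower ℂ R H]
    (ordR : R → ℕ∞) (ord : H → ℕ∞)
    (hR0 : ∀ r : R, ordR r = ⊤ ↔ r = 0)
    (hRmul : ∀ r s : R, ordR r + ordR s ≤ ordR (r * s))
    (hRsmul : ∀ (c : ℂ) (r : R), c ≠ 0 → ordR (c • r) = ordR r)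
    (hRadd : ∀ r s : R, min (ordR r) (ordR s) ≤ ordR (r + s))
    (h0 : ∀ x : H, ord x = ⊤ ↔ x = 0)
    (hmul : ∀ (r : R) (x : H), ordR r + ord x ≤ ord (r • x))
    (hsmul : ∀ (c : ℂ) (x : H), c ≠ 0 → ord (c • x) = ord x)
    (hadd : ∀ x y : H, min (ord x) (ord y) ≤ ord (x + y))
    (husc : UpperSemicontinuous ord)
    -- `PH m` is the orthogonal projection of `H` onto the component `H_m`
    (PH : ℕ → H → H)
    (hPH : ∀ (m : ℕ) (x : H), PH m x ∈ nearHomog ord (⊤ : Submodule ℂ H) m ∧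
      ∀ w ∈ nearHomog ord (⊤ : Submodule ℂ H) m, (inner ℂ (x - PH m x) w : ℂ) = 0)
    (V : Submodule ℂ H) (hVc : IsClosed (V : Set H))
    (hinv : ∀ r : R, 1 ≤ ordR r → ∀ v ∈ V, r • v ∈ V) :
    ∀ (k m : ℕ), ∀ r : R, 1 ≤ ordR r → ∀ h ∈ nearHomog ord V k, ∀ g ∈ V,
      (m : ℕ∞) ≤ ord (r • h + g) →
      PH m (r • h + g) ∈ PH m '' (nearHomog ord V m) := by
  intro k m r hr h hh g hg hord
  set x := r • h + g with hxdef
  have hxV : x ∈ V := V.add_mem (hinv r hr h hh.1.1) hg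
  have hord0 : ord (0 : H) = ⊤ := (h0 0).mpr rfl
  -- the closed submodule V_{m+1}
  let K : Submodule ℂ H :=
    { carrier := valSeries ord V (m + 1)
      add_mem' := by
        rintro a b ⟨haV, hao⟩ ⟨hbV, hbo⟩
        exact ⟨V.add_mem haV hbV, le_trans (le_min hao hbo) (hadd a b)⟩
      zero_mem' := ⟨V.zero_mem, by simp [hord0]⟩
      smul_mem' := by
        rintro c a ⟨haV, hao⟩
        refine ⟨V.smul_mem c haV, ?_⟩
        rcases eq_or_ne c 0 with rfl | hc
        · simp [hord0]
        · rw [hsmul c a hc]; exact hao }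
  have hopen : IsOpen {z : H | ord z < ((m + 1 : ℕ) : ℕ∞)} := by
    rw [isOpen_iff_mem_nhds]
    intro z hz
    exact husc z _ hz
  have hKc : IsClosed (K : Set H) := by
    have : (K : Set H) = (V : Set H) ∩ {z : H | ord z < ((m + 1 : ℕ) : ℕ∞)}ᶜ := by
      ext z
      simp [K, valSeries, Set.mem_setOf_eq, not_lt]
    rw [this]
    exact hVc.inter hopen.isClosed_compl
  haveI : CompleteSpace K := hKc.completeSpace_coe
  set x' : H := (K.orthogonalProjectionOnto x : H) with hx'def
  have hx'K : x' ∈ K := (K.orthogonalProjectionOnto x).2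
  have hx'ord : ((m + 1 : ℕ) : ℕ∞) ≤ ord x' := hx'K.2
  set w : H := x - x' with hwdef
  -- w is in the near homogeneous component W_m
  have hwW : w ∈ nearHomog ord V m := by
    refine ⟨⟨V.sub_mem hxV hx'K.1, ?_⟩, ?_⟩
    · have hnegx' : ord (-x') = ord x' := by
        rw [← neg_one_smul ℂ x']
        exact hsmul (-1) x' (by norm_num)
      have : min (ord x) (ord (-x')) ≤ ord (x + -x') := hadd x (-x')
      rw [hnegx'] at this
      have hmineq : (m : ℕ∞) ≤ min (ord x) (ord x') :=
        le_min hord (le_trans (by exact_mod_cast Nat.le_succ m) hx'ord)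
      calc (m : ℕ∞) ≤ min (ord x) (ord x') := hmineq
        _ ≤ ord (x + -x') := this
        _ = ord w := by rw [hwdef, sub_eq_add_neg]
    · intro y hy
      exact Submodule.starProjection_inner_eq_zero x y hy
  set p : H := PH m x with hpdef
  set q : H := PH m w with hqdef
  -- key: p - q is orthogonal to every element of the H-component H_m
  have key : ∀ u ∈ nearHomog ord (⊤ : Submodule ℂ H) m, (inner ℂ (p - q) u : ℂ) = 0 := by
    intro u hu
    have h1 : (inner ℂ (x - p) u : ℂ) = 0 := (hPH m x).2 u hu
    have h2 : (inner ℂ (w - q) u : ℂ) = 0 := (hPH m w).2 u hu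
    have h3 : (inner ℂ x' u : ℂ) = 0 := by
      rw [← inner_eq_zero_symm]
      exact hu.2 x' ⟨Submodule.mem_top, hx'ord⟩
    have hveq : p - q = x' + (w - q) - (x - p) := by
      rw [hwdef]; abel
    rw [hveq, inner_sub_left, inner_add_left, h1, h2, h3]
    ring
  have hpC : p ∈ nearHomog ord (⊤ : Submodule ℂ H) m := (hPH m x).1
  have hqC : q ∈ nearHomog ord (⊤ : Submodule ℂ H) m := (hPH m w).1
  have hpq : (inner ℂ (p - q) (p - q) : ℂ) = 0 := by
    rw [inner_sub_right, key p hpC, key q hqC]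
    ring
  have hpq0 : p - q = 0 := by rwa [inner_self_eq_zero] at hpq
  exact ⟨w, hwW, by rw [← hqdef, ← sub_eq_zero.mp hpq0]⟩
end

section
/- (Abstract Beurling's theorem) Let V be a closed subspace of a valuation Hilbert module H over a valuation algebra R. Then V is R₁-invariant (R₁·V ⊆ V) if and only if the near homogeneous decomposition of V is near inner and has the full projection property. -/
variable {H : Type*} [NormedAddCommGroup H] [InnerProductSpace ℂ H]

set_option linter.unusedSectionVars false
set_option maxHeartbeats 1000000

lemma enat_top_of_all (t : ℕ∞) (h : ∀ n : ℕ, (n : ℕ∞) ≤ t) : t = ⊤ := by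
  by_contra ht
  have h1 := h (ENat.toNat t + 1)
  rw [← ENat.coe_toNat_eq_self.2 ht] at h1
  exact_mod_cast Nat.not_succ_le_self _ (by exact_mod_cast h1)

section helpers
variable (ord : H → ℕ∞)
  (h0 : ∀ x : H, ord x = ⊤ ↔ x = 0)
  (hsmul : ∀ (c : ℂ) (x : H), c ≠ 0 → ord (c • x) = ord x)
  (hadd : ∀ x y : H, min (ord x) (ord y) ≤ ord (x + y))
  (husc : UpperSemicontinuous ord)

include h0 in
lemma ord_zero' : ord (0 : H) = ⊤ := (h0 0).2 rfl

include hsmul in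
lemma ord_neg' (x : H) : ord (-x) = ord x := by
  have := hsmul (-1) x (by norm_num)
  simpa using this

include hsmul hadd in
lemma ord_sub' (x y : H) : min (ord x) (ord y) ≤ ord (x - y) := by
  have := hadd x (-y)
  rw [ord_neg' ord hsmul] at this
  simpa [sub_eq_add_neg] using this

include h0 hsmul hadd in
lemma nearHomog_sub (V : Submodule ℂ H) (m : ℕ) {p q : H}
    (hp : p ∈ nearHomog ord V m) (hq : q ∈ nearHomog ord V m) :
    p - q ∈ nearHomog ord V m := by
  refine ⟨⟨V.sub_mem hp.1.1 hq.1.1,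
    le_trans (le_min hp.1.2 hq.1.2) (ord_sub' ord hsmul hadd p q)⟩, ?_⟩
  intro y hy
  rw [inner_sub_left, hp.2 y hy, hq.2 y hy, sub_zero]

/-- `valSeries` as a submodule. -/
def valSub (ord : H → ℕ∞) (h0 : ∀ x : H, ord x = ⊤ ↔ x = 0)
    (hsmul : ∀ (c : ℂ) (x : H), c ≠ 0 → ord (c • x) = ord x)
    (hadd : ∀ x y : H, min (ord x) (ord y) ≤ ord (x + y))
    (V : Submodule ℂ H) (k : ℕ) : Submodule ℂ H where
  carrier := valSeries ord V k
  zero_mem' := ⟨V.zero_mem, by rw [ord_zero' ord h0]; exact le_top⟩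
  add_mem' := by
    rintro x y ⟨hxV, hxo⟩ ⟨hyV, hyo⟩
    exact ⟨V.add_mem hxV hyV, le_trans (le_min hxo hyo) (hadd x y)⟩
  smul_mem' := by
    rintro c x ⟨hxV, hxo⟩
    refine ⟨V.smul_mem c hxV, ?_⟩
    rcases eq_or_ne c 0 with rfl | hc
    · rw [zero_smul, ord_zero' ord h0]; exact le_top
    · rw [hsmul c x hc]; exact hxo

include husc in
lemma isClosed_ord_ge (m : ℕ) :
    IsClosed {x : H | (m : ℕ∞) ≤ ord x} := by
  have : {x : H | (m : ℕ∞) ≤ ord x} = {x : H | ord x < (m : ℕ∞)}ᶜ := by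
    ext x; simp [not_lt]
  rw [this]
  exact (husc.isOpen_preimage m).isClosed_compl

include husc in
lemma isClosed_valSeries (V : Submodule ℂ H) (hVc : IsClosed (V : Set H)) (k : ℕ) :
    IsClosed (valSeries ord V k) := by
  have : valSeries ord V k = (V : Set H) ∩ {x : H | (k : ℕ∞) ≤ ord x} := rfl
  rw [this]
  exact hVc.inter (isClosed_ord_ge ord husc k)

include h0 hsmul hadd husc in
/-- Decomposition `V_m = W_m ⊕ V_{m+1}`. -/
lemma decomp' [CompleteSpace H] (V : Submodule ℂ H) (hVc : IsClosed (V : Set H))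
    (m : ℕ) (x : H) (hxV : x ∈ V) (hxo : (m : ℕ∞) ≤ ord x) :
    ∃ w y : H, x = w + y ∧ w ∈ nearHomog ord V m ∧ y ∈ valSeries ord V (m + 1) := by
  set K : Submodule ℂ H := valSub ord h0 hsmul hadd V (m + 1) with hK
  have hKc : IsClosed (K : Set H) := isClosed_valSeries ord husc V hVc (m + 1)
  haveI : CompleteSpace K := hKc.completeSpace_coe
  set y : H := (Submodule.orthogonalProjection K x : H) with hy
  have hyK : y ∈ K := (Submodule.orthogonalProjection K x).2
  have hperp : x - y ∈ Kᗮ := Submodule.sub_starProjection_mem_orthogonal (K := K) x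
  refine ⟨x - y, y, by abel, ?_, hyK⟩
  have hyV : y ∈ V := hyK.1
  have hyo : ((m : ℕ) + 1 : ℕ∞) ≤ ord y := by exact_mod_cast hyK.2
  refine ⟨⟨V.sub_mem hxV hyV, ?_⟩, ?_⟩
  · refine le_trans (le_min hxo ?_) (ord_sub' ord hsmul hadd x y)
    exact le_trans (by exact_mod_cast Nat.cast_le.2 (Nat.le_succ m)) hyo
  · intro z hz
    have hzK : z ∈ K := hz
    have := (Submodule.mem_orthogonal K (x - y)).1 hperp z hzK
    rw [inner_eq_zero_symm] at this
    exact this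

variable (PH : ℕ → H → H)
  (hPH : ∀ (m : ℕ) (x : H), PH m x ∈ nearHomog ord (⊤ : Submodule ℂ H) m ∧
      ∀ w ∈ nearHomog ord (⊤ : Submodule ℂ H) m, (inner ℂ (x - PH m x) w : ℂ) = 0)

include h0 hsmul hadd hPH in
lemma PH_unique (m : ℕ) (x p : H) (hp : p ∈ nearHomog ord (⊤ : Submodule ℂ H) m)
    (horth : ∀ u ∈ nearHomog ord (⊤ : Submodule ℂ H) m, (inner ℂ (x - p) u : ℂ) = 0) :
    PH m x = p := by
  set q := PH m x with hq
  have hqm := (hPH m x).1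
  have hd : p - q ∈ nearHomog ord (⊤ : Submodule ℂ H) m :=
    nearHomog_sub ord h0 hsmul hadd ⊤ m hp hqm
  have h1 : (inner ℂ (x - q) (p - q) : ℂ) = 0 := (hPH m x).2 _ hd
  have h2 : (inner ℂ (x - p) (p - q) : ℂ) = 0 := horth _ hd
  have h3 : (inner ℂ ((x - q) - (x - p)) (p - q) : ℂ) = 0 := by
    rw [inner_sub_left, h1, h2, sub_zero]
  rw [show (x - q) - (x - p) = p - q from by abel] at h3
  have h4 := inner_self_eq_zero.1 h3
  rw [sub_eq_zero] at h4
  exact h4.symm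

include h0 hsmul hadd husc in
lemma ord_jump [CompleteSpace H] (m : ℕ) (x : H) (hxo : (m : ℕ∞) ≤ ord x)
    (horth : ∀ u ∈ nearHomog ord (⊤ : Submodule ℂ H) m, (inner ℂ x u : ℂ) = 0) :
    ((m + 1 : ℕ) : ℕ∞) ≤ ord x := by
  obtain ⟨w, y, hxy, hw, hy⟩ :=
    decomp' ord h0 hsmul hadd husc ⊤ (by simp) m x trivial hxo
  have h1 : (inner ℂ x w : ℂ) = 0 := horth w hw
  have h3 : (inner ℂ y w : ℂ) = 0 := inner_eq_zero_symm.1 (hw.2 y hy)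
  rw [hxy, inner_add_left, h3, add_zero] at h1
  have hw0 : w = 0 := inner_self_eq_zero.1 h1
  rw [show x = y by rw [hxy, hw0, zero_add]]
  exact hy.2

end helpers


/-- abstract Beurling's theorem: a closed subspace `V` of a
valuation Hilbert module is `R₁`-invariant if and only if its near homogeneous
decomposition is near inner and has the full projection property. -/
theorem abstract_beurling
    {R : Type*} [Ring R] [Algebra ℂ R] [CompleteSpace H]
    [Module R H] [IsScalarTower ℂ R H]
    (ordR : R → ℕ∞) (ord : H → ℕ∞)
    (hR0 : ∀ r : R, ordR r = ⊤ ↔ r = 0)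
    (hRmul : ∀ r s : R, ordR r + ordR s ≤ ordR (r * s))
    (hRsmul : ∀ (c : ℂ) (r : R), c ≠ 0 → ordR (c • r) = ordR r)
    (hRadd : ∀ r s : R, min (ordR r) (ordR s) ≤ ordR (r + s))
    (h0 : ∀ x : H, ord x = ⊤ ↔ x = 0)
    (hmul : ∀ (r : R) (x : H), ordR r + ord x ≤ ord (r • x))
    (hsmul : ∀ (c : ℂ) (x : H), c ≠ 0 → ord (c • x) = ord x)
    (hadd : ∀ x y : H, min (ord x) (ord y) ≤ ord (x + y))
    (husc : UpperSemicontinuous ord)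
    -- multiplication by each element of `R` is bounded (continuous)
    (hcont : ∀ r : R, Continuous fun x : H => r • x)
    -- `PH m` is the orthogonal projection of `H` onto the component `H_m`
    (PH : ℕ → H → H)
    (hPH : ∀ (m : ℕ) (x : H), PH m x ∈ nearHomog ord (⊤ : Submodule ℂ H) m ∧
      ∀ w ∈ nearHomog ord (⊤ : Submodule ℂ H) m, (inner ℂ (x - PH m x) w : ℂ) = 0)
    (V : Submodule ℂ H) (hVc : IsClosed (V : Set H)) :
    (∀ r : R, 1 ≤ ordR r → ∀ v ∈ V, r • v ∈ V) ↔
      ((∀ (k m : ℕ), ∀ h ∈ nearHomog ord V k, ∀ g ∈ V, ∀ r : R, 1 ≤ ordR r →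
          (m : ℕ∞) < ord (r • h + g) →
          ∀ w ∈ nearHomog ord V m, (inner ℂ (r • h + g) w : ℂ) = 0) ∧
        (∀ (k m : ℕ), ∀ r : R, 1 ≤ ordR r → ∀ h ∈ nearHomog ord V k, ∀ g ∈ V,
          (m : ℕ∞) ≤ ord (r • h + g) →
          PH m (r • h + g) ∈ PH m '' (nearHomog ord V m))) := by
  constructor
  · -- forward direction
    intro hinv
    constructor
    · -- near inner
      intro k m h hh g hg r hr hlt w hw
      have hx : r • h + g ∈ V := V.add_mem (hinv r hr h hh.1.1) hg
      have hord : ((m + 1 : ℕ) : ℕ∞) ≤ ord (r • h + g) := by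
        push_cast
        exact (ENat.add_one_le_iff (ENat.coe_ne_top m)).2 hlt
      exact inner_eq_zero_symm.1 (hw.2 _ ⟨hx, hord⟩)
    · -- full projection
      intro k m r hr h hh g hg hord
      have hx : r • h + g ∈ V := V.add_mem (hinv r hr h hh.1.1) hg
      obtain ⟨w, y, hxy, hw, hy⟩ :=
        decomp' ord h0 hsmul hadd husc V hVc m (r • h + g) hx hord
      refine ⟨w, hw, ?_⟩
      refine (PH_unique ord h0 hsmul hadd PH hPH m (r • h + g) (PH m w)
        (hPH m w).1 ?_).symm
      intro u hu
      have e1 : r • h + g - PH m w = (w - PH m w) + y := by rw [hxy]; abel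
      have h2 : (inner ℂ y u : ℂ) = 0 :=
        inner_eq_zero_symm.1 (hu.2 y ⟨trivial, hy.2⟩)
      rw [e1, inner_add_left, (hPH m w).2 u hu, h2, add_zero]
  · -- backward direction
    rintro ⟨hnear, hfull⟩ r hr v hv
    classical
    -- Step 1: r • h ∈ V for every h in every near homogeneous component
    have key : ∀ k : ℕ, ∀ h ∈ nearHomog ord V k, r • h ∈ V := by
      intro k h hh
      have step : ∀ (n : ℕ) (g : H), g ∈ V → ((k + 1 + n : ℕ) : ℕ∞) ≤ ord (r • h + g) →
          ∃ g' : H, g' ∈ V ∧ ((k + 1 + (n + 1) : ℕ) : ℕ∞) ≤ ord (r • h + g') ∧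
            g - g' ∈ nearHomog ord V (k + 1 + n) := by
        intro n g hg hord
        obtain ⟨w, hwW, hwP⟩ := hfull k (k + 1 + n) r hr h hh g hg hord
        refine ⟨g - w, V.sub_mem hg hwW.1.1, ?_, by simpa using hwW⟩
        have hxw : r • h + (g - w) = (r • h + g) - w := by abel
        rw [hxw]
        have h1 : ((k + 1 + n : ℕ) : ℕ∞) ≤ ord ((r • h + g) - w) :=
          le_trans (le_min hord hwW.1.2) (ord_sub' ord hsmul hadd _ w)
        exact ord_jump ord h0 hsmul hadd husc (k + 1 + n) _ h1 (by
          intro u hu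
          have e1 : (r • h + g) - w =
              ((r • h + g) - PH (k + 1 + n) (r • h + g)) - (w - PH (k + 1 + n) w) := by
            rw [hwP]; abel
          rw [e1, inner_sub_left, (hPH (k + 1 + n) (r • h + g)).2 u hu,
            (hPH (k + 1 + n) w).2 u hu, sub_zero])
      choose f hf1 hf2 hf3 using step
      set G : ℕ → H := fun n => Nat.rec (0 : H)
        (fun n g => if hgp : g ∈ V ∧ ((k + 1 + n : ℕ) : ℕ∞) ≤ ord (r • h + g)
          then f n g hgp.1 hgp.2 else 0) n with hGdef
      have inv : ∀ n, G n ∈ V ∧ ((k + 1 + n : ℕ) : ℕ∞) ≤ ord (r • h + G n) := by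
        intro n
        induction n with
        | zero =>
          have hG0 : G 0 = 0 := rfl
          have h1 : (1 : ℕ∞) + (k : ℕ∞) ≤ ordR r + ord h := add_le_add hr hh.1.2
          have hc : ((k + 1 + 0 : ℕ) : ℕ∞) = 1 + (k : ℕ∞) := by push_cast; ring
          refine ⟨by rw [hG0]; exact V.zero_mem, ?_⟩
          rw [hG0, hc, add_zero]
          exact le_trans h1 (hmul r h)
        | succ n ih =>
          have hstep : G (n + 1) = f n (G n) ih.1 ih.2 := by
            show (if hgp : G n ∈ V ∧ ((k + 1 + n : ℕ) : ℕ∞) ≤ ord (r • h + G n)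
              then f n (G n) hgp.1 hgp.2 else 0) = _
            rw [dif_pos ⟨ih.1, ih.2⟩]
          rw [hstep]
          exact ⟨hf1 n (G n) ih.1 ih.2, hf2 n (G n) ih.1 ih.2⟩
      have hWn : ∀ n, G n - G (n + 1) ∈ nearHomog ord V (k + 1 + n) := by
        intro n
        have hstep : G (n + 1) = f n (G n) (inv n).1 (inv n).2 := by
          show (if hgp : G n ∈ V ∧ ((k + 1 + n : ℕ) : ℕ∞) ≤ ord (r • h + G n)
            then f n (G n) hgp.1 hgp.2 else 0) = _
          rw [dif_pos ⟨(inv n).1, (inv n).2⟩]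
        rw [hstep]
        exact hf3 n (G n) (inv n).1 (inv n).2
      set x : ℕ → H := fun n => r • h + G n with hxdef
      have horth : ∀ p q : ℕ, p ≤ q → ∀ t : ℕ, q ≤ t →
          (inner ℂ (x t) (x p - x q) : ℂ) = 0 := by
        intro p q hpq
        induction q, hpq using Nat.le_induction with
        | base => intro t ht; simp
        | succ q hq ih =>
          intro t ht
          have e : x p - x (q + 1) = (x p - x q) + (G q - G (q + 1)) := by
            simp only [hxdef]; abel
          rw [e, inner_add_right, ih t (le_trans (Nat.le_succ q) ht), zero_add]
          refine hnear k (k + 1 + q) h hh (G t) (inv t).1 r hr ?_ _ (hWn q)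
          refine lt_of_lt_of_le ?_ (inv t).2
          exact_mod_cast Nat.add_lt_add_left (Nat.lt_of_lt_of_le (Nat.lt_succ_self q) ht) _
      have hpyth : ∀ p q : ℕ, p ≤ q → ‖x p‖ ^ 2 = ‖x q‖ ^ 2 + ‖x p - x q‖ ^ 2 := by
        intro p q hpq
        have hn := norm_add_sq (𝕜 := ℂ) (x q) (x p - x q)
        rw [show x q + (x p - x q) = x p from by abel] at hn
        rw [hn, horth p q hpq q le_rfl]
        simp
      -- the real sequence of squared norms converges, hence x is Cauchy
      set a : ℕ → ℝ := fun n => ‖x n‖ ^ 2 with hadef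
      have hmono : Antitone a := by
        intro p q hpq
        have h2 := hpyth p q hpq
        show ‖x q‖ ^ 2 ≤ ‖x p‖ ^ 2
        nlinarith [sq_nonneg ‖x p - x q‖]
      have hbdd : BddBelow (Set.range a) := by
        refine ⟨0, ?_⟩
        rintro y ⟨n, rfl⟩
        positivity
      have hconv : Filter.Tendsto a Filter.atTop (nhds (⨅ n, a n)) :=
        tendsto_atTop_ciInf hmono hbdd
      have hcauchy_a : CauchySeq a := hconv.cauchySeq
      have hcauchy : CauchySeq x := by
        rw [Metric.cauchySeq_iff]
        intro ε hε
        obtain ⟨N, hN⟩ := Metric.cauchySeq_iff.1 hcauchy_a (ε ^ 2) (by positivity)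
        refine ⟨N, fun p hp q hq => ?_⟩
        have key2 : ∀ p' q' : ℕ, p' ≤ q' → p' ≥ N → q' ≥ N → dist (x p') (x q') < ε := by
          intro p' q' hle hp' hq'
          have h1 := hN p' hp' q' hq'
          rw [Real.dist_eq] at h1
          have h2 := hpyth p' q' hle
          have h3 : ‖x p' - x q'‖ ^ 2 < ε ^ 2 := by
            have : a p' - a q' < ε ^ 2 := lt_of_le_of_lt (le_abs_self _) h1
            simp only [hadef] at this
            nlinarith
          rw [dist_eq_norm]
          exact lt_of_pow_lt_pow_left₀ 2 (le_of_lt hε) h3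
        rcases le_total p q with hle | hle
        · exact key2 p q hle hp hq
        · rw [dist_comm]; exact key2 q p hle hq hp
      obtain ⟨L, hL⟩ := cauchySeq_tendsto_of_complete hcauchy
      have hGL : Filter.Tendsto G Filter.atTop (nhds (L - r • h)) := by
        have : G = fun n => x n - r • h := by
          funext n; simp only [hxdef]; abel
        rw [this]
        exact hL.sub tendsto_const_nhds
      have hLV : L - r • h ∈ V :=
        hVc.mem_of_tendsto hGL (Filter.Eventually.of_forall fun n => (inv n).1)
      have hLtop : ord L = ⊤ := by
        apply enat_top_of_all
        intro n
        refine (isClosed_ord_ge ord husc n).mem_of_tendsto hL ?_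
        rw [Filter.eventually_atTop]
        refine ⟨n, fun m hm => ?_⟩
        refine le_trans ?_ (inv m).2
        have hnm : n ≤ k + 1 + m := by omega
        exact_mod_cast hnm
      have hL0 : L = 0 := (h0 L).1 hLtop
      have : r • h = -(L - r • h) := by rw [hL0]; abel
      rw [this]
      exact V.neg_mem hLV
    -- Step 2: extend to all of V via the near homogeneous decomposition
    have hcomm : ∀ (c : ℂ) (y : H), r • (c • y) = c • (r • y) := by
      intro c y
      have h1 : (c • (1 : R)) • y = c • y := by rw [smul_assoc, one_smul]
      calc r • (c • y) = r • ((c • (1 : R)) • y) := by rw [h1]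
        _ = (r * (c • (1 : R))) • y := (mul_smul _ _ _).symm
        _ = ((c • (1 : R)) * r) • y := by
            rw [← Algebra.algebraMap_eq_smul_one, ← Algebra.commutes]
        _ = (c • (1 : R)) • (r • y) := mul_smul _ _ _
        _ = c • (r • y) := by rw [smul_assoc, one_smul]
    set S : Submodule ℂ H :=
      { carrier := {y : H | r • y ∈ V}
        zero_mem' := by simp only [Set.mem_setOf_eq, smul_zero]; exact V.zero_mem
        add_mem' := by
          intro p q hp hq
          simp only [Set.mem_setOf_eq, smul_add]
          exact V.add_mem hp hq
        smul_mem' := by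
          intro c p hp
          simp only [Set.mem_setOf_eq, hcomm c p]
          exact V.smul_mem c hp } with hSdef
    have hScl : IsClosed (S : Set H) := hVc.preimage (hcont r)
    set U : Submodule ℂ H := Submodule.span ℂ (⋃ k, nearHomog ord V k) with hUdef
    have hUS : U ≤ S := by
      rw [hUdef, Submodule.span_le]
      rintro y hy
      obtain ⟨k, hk⟩ := Set.mem_iUnion.1 hy
      exact key k y hk
    have hUV : U ≤ V := by
      rw [hUdef, Submodule.span_le]
      rintro y hy
      obtain ⟨k, hk⟩ := Set.mem_iUnion.1 hy
      exact hk.1.1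
    -- the spanning property: V ⊆ closure U
    have hspan : (V : Set H) ⊆ closure (U : Set H) := by
      intro z hz
      set K : Submodule ℂ H := U.topologicalClosure with hKdef
      haveI : CompleteSpace K := U.isClosed_topologicalClosure.completeSpace_coe
      set w : H := z - (Submodule.orthogonalProjection K z : H) with hwdef
      have hwperp : w ∈ Kᗮ := Submodule.sub_starProjection_mem_orthogonal (K := K) z
      have hKV : K ≤ V := Submodule.topologicalClosure_minimal U hUV hVc
      have hwV : w ∈ V := V.sub_mem hz (hKV (Submodule.orthogonalProjection K z).2)
      have hword : ∀ n : ℕ, (n : ℕ∞) ≤ ord w := by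
        intro n
        induction n with
        | zero => simp
        | succ n ih =>
          obtain ⟨u, y, hwy, hu, hy⟩ :=
            decomp' ord h0 hsmul hadd husc V hVc n w hwV ih
          have huK : u ∈ K :=
            Submodule.le_topologicalClosure U
              (Submodule.subset_span (Set.mem_iUnion.2 ⟨n, hu⟩))
          have h1 : (inner ℂ u w : ℂ) = 0 :=
            (Submodule.mem_orthogonal K w).1 hwperp u huK
          rw [hwy, inner_add_right, hu.2 y hy, add_zero] at h1
          have hu0 : u = 0 := inner_self_eq_zero.1 h1
          rw [show w = y by rw [hwy, hu0, zero_add]]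
          exact_mod_cast hy.2
      have hw0 : w = 0 := (h0 w).1 (enat_top_of_all _ hword)
      have hze : z = (Submodule.orthogonalProjection K z : H) := by
        rw [← sub_eq_zero]; exact hw0
      have hzK : z ∈ U.topologicalClosure := by
        rw [hze]; exact (Submodule.orthogonalProjection K z).2
      rw [← Submodule.topologicalClosure_coe]
      exact hzK
    have hVS : (V : Set H) ⊆ (S : Set H) :=
      subset_trans hspan (closure_minimal hUS hScl)
    exact hVS hv
end
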